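/- Let N ≥ 1 and let g : ℝ^N → [0,∞) be continuous, integrable with ∫_{ℝ^N} g = M > 0, symmetric in each coordinate (g(…,−y_i,…) = g(y) for every i), and, for each i, nonincreasing in y_i on [0,∞) with the other coordinates fixed. Let 0 < r_0 < R be such that (a) ∫_{{y : some |y_i| ≥ R}} g(y) dy ≤ M/4, and (b) for every i, ∫_{A_i} g(y) dy ≤ M/(4N), where A_i := { y : |y_i| ≤ r_0 and |y_j| ≤ R for all j }. Then g(y) ≥ M · 2^{−(N+1)} (R − r_0)^{−N} for every y with |y_i| ≤ r_0 for all i. -/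

import Mathlib

open MeasureTheory

section QPaux
variable {N : ℕ}

/-- sign flip map -/
def qpflip (b : Fin N → Bool) (y : Fin N → ℝ) : Fin N → ℝ :=
  fun i => if b i then -(y i) else y i

lemma qpflip_invol (b : Fin N → Bool) (y : Fin N → ℝ) : qpflip b (qpflip b y) = y := by
  funext i; simp [qpflip]; cases b i <;> simp

lemma qpflip_continuous (b : Fin N → Bool) : Continuous (qpflip (N := N) b) := by
  refine continuous_pi fun i => ?_
  cases h : b i <;> simp [qpflip, h] <;> fun_prop

lemma qpflip_measurePreserving (b : Fin N → Bool) :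
    MeasurePreserving (qpflip (N := N) b) volume volume := by
  have : (qpflip (N := N) b) = fun y i => (fun x : ℝ => if b i then -x else x) (y i) := by
    funext y i; rfl
  rw [this]
  refine volume_preserving_pi (f := fun (i : Fin N) (x : ℝ) => if b i then -x else x)
    fun i => ?_
  cases h : b i <;> simp [h]
  · exact MeasurePreserving.id _
  · exact Measure.measurePreserving_neg _

noncomputable def qpflipHomeo (b : Fin N → Bool) : (Fin N → ℝ) ≃ₜ (Fin N → ℝ) where
  toFun := qpflip b
  invFun := qpflip b
  left_inv := qpflip_invol b
  right_inv := qpflip_invol b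
  continuous_toFun := qpflip_continuous b
  continuous_invFun := qpflip_continuous b

lemma qpflip_embedding (b : Fin N → Bool) : MeasurableEmbedding (qpflip (N := N) b) :=
  (qpflipHomeo b).toMeasurableEquiv.measurableEmbedding

lemma qp_g_flip_finset (g : (Fin N → ℝ) → ℝ)
    (hsym : ∀ (i : Fin N) (y : Fin N → ℝ), g (Function.update y i (-(y i))) = g y)
    (y : Fin N → ℝ) :
    ∀ s : Finset (Fin N), g (fun i => if i ∈ s then -(y i) else y i) = g y := by
  intro s
  induction s using Finset.induction_on with
  | empty => simp
  | @insert j s hj ih =>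
    have key : (fun i => if i ∈ insert j s then -(y i) else y i)
        = Function.update (fun i => if i ∈ s then -(y i) else y i) j
          (-((fun i => if i ∈ s then -(y i) else y i) j)) := by
      funext i
      rcases eq_or_ne i j with rfl | h
      · simp [Function.update, hj]
      · simp [Function.update, h, Finset.mem_insert]
    rw [key, hsym, ih]

lemma qp_g_qpflip (g : (Fin N → ℝ) → ℝ)
    (hsym : ∀ (i : Fin N) (y : Fin N → ℝ), g (Function.update y i (-(y i))) = g y)
    (b : Fin N → Bool) (y : Fin N → ℝ) : g (qpflip b y) = g y := by
  have h := qp_g_flip_finset g hsym y (Finset.univ.filter (fun i => b i = true))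
  have : qpflip b y = fun i => if i ∈ Finset.univ.filter (fun i => b i = true)
      then -(y i) else y i := by
    funext i
    simp only [qpflip, Finset.mem_filter, Finset.mem_univ, true_and]
  rw [this, h]

lemma qp_mono (g : (Fin N → ℝ) → ℝ)
    (hmono : ∀ (i : Fin N) (y : Fin N → ℝ) (a b : ℝ), 0 ≤ a → a ≤ b →
      g (Function.update y i b) ≤ g (Function.update y i a))
    (a b : Fin N → ℝ) (ha : ∀ i, 0 ≤ a i) (hab : ∀ i, a i ≤ b i) : g b ≤ g a := by
  have key : ∀ s : Finset (Fin N), g b ≤ g (fun i => if i ∈ s then a i else b i) := by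
    intro s
    induction s using Finset.induction_on with
    | empty => simp
    | @insert j s hj ih =>
      have h1 : (fun i => if i ∈ s then a i else b i)
          = Function.update (fun i => if i ∈ s then a i else b i) j (b j) := by
        funext i
        rcases eq_or_ne i j with rfl | h
        · simp [Function.update, hj]
        · simp [Function.update, h]
      have h2 : (fun i => if i ∈ insert j s then a i else b i)
          = Function.update (fun i => if i ∈ s then a i else b i) j (a j) := by
        funext i
        rcases eq_or_ne i j with rfl | h
        · simp [Function.update]
        · simp [Function.update, h, Finset.mem_insert]
      have hm := hmono j (fun i => if i ∈ s then a i else b i) (a j) (b j) (ha j) (hab j)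
      rw [← h1, ← h2] at hm
      exact ih.trans hm
  have h := key Finset.univ
  simpa using h

end QPaux

/-- the measure-theoretic core of the quantitative positivity lemma:
a separately symmetric, separately nonincreasing, continuous integrable function of
mass `M > 0` whose mass neither escapes to infinity (a) nor concentrates near the
coordinate hyperplanes (b) is bounded below by `M 2^{-(N+1)} (R-r₀)^{-N}` on the box
`{|y_i| ≤ r₀ ∀i}`. -/
theorem quantitative_positivity (N : ℕ) (hN : 1 ≤ N)
    (g : (Fin N → ℝ) → ℝ) (hgcont : Continuous g) (hgnn : ∀ y, 0 ≤ g y)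
    (hgint : Integrable g) (M : ℝ) (hM : (∫ y, g y) = M) (hMpos : 0 < M)
    (hsym : ∀ (i : Fin N) (y : Fin N → ℝ),
      g (Function.update y i (-(y i))) = g y)
    (hmono : ∀ (i : Fin N) (y : Fin N → ℝ) (a b : ℝ), 0 ≤ a → a ≤ b →
      g (Function.update y i b) ≤ g (Function.update y i a))
    (r₀ R : ℝ) (hr₀ : 0 < r₀) (hr₀R : r₀ < R)
    (ha : (∫ y in {y : Fin N → ℝ | ∃ i, R ≤ |y i|}, g y) ≤ M / 4)
    (hb : ∀ i : Fin N,
      (∫ y in {y : Fin N → ℝ | |y i| ≤ r₀ ∧ ∀ j, |y j| ≤ R}, g y) ≤ M / (4 * N)) :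
    ∀ y : Fin N → ℝ, (∀ i, |y i| ≤ r₀) →
      M * ((2 : ℝ) ^ (N + 1))⁻¹ * ((R - r₀) ^ N)⁻¹ ≤ g y := by
  intro y hy
  set c : Fin N → ℝ := fun _ => r₀ with hc
  set B : Set (Fin N → ℝ) := {z | ∃ i, R ≤ |z i|} with hB
  set A : Fin N → Set (Fin N → ℝ) := fun i => {z | |z i| ≤ r₀ ∧ ∀ j, |z j| ≤ R} with hA
  set Ωp : Set (Fin N → ℝ) := Set.univ.pi (fun _ => Set.Ioo r₀ R) with hΩp
  set Ω : Set (Fin N → ℝ) := {z | ∀ i, |z i| ∈ Set.Ioo r₀ R} with hΩ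
  have habs : ∀ i : Fin N, Measurable (fun z : Fin N → ℝ => |z i|) :=
    fun i => (measurable_pi_apply i).abs
  have measB : MeasurableSet B := by
    have : B = ⋃ i, {z : Fin N → ℝ | R ≤ |z i|} := by ext z; simp [hB]
    rw [this]
    exact MeasurableSet.iUnion fun i => measurableSet_le measurable_const (habs i)
  have measA : ∀ i, MeasurableSet (A i) := by
    intro i
    have : A i = {z : Fin N → ℝ | |z i| ≤ r₀} ∩ ⋂ j, {z : Fin N → ℝ | |z j| ≤ R} := by
      ext z; simp [hA]
    rw [this]
    exact (measurableSet_le (habs i) measurable_const).inter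
      (MeasurableSet.iInter fun j => measurableSet_le (habs j) measurable_const)
  have measΩ : MeasurableSet Ω := by
    have : Ω = ⋂ i, ({z : Fin N → ℝ | r₀ < |z i|} ∩ {z : Fin N → ℝ | |z i| < R}) := by
      ext z; simp [hΩ, Set.mem_Ioo, forall_and]
    rw [this]
    exact MeasurableSet.iInter fun i =>
      (measurableSet_lt measurable_const (habs i)).inter
        (measurableSet_lt (habs i) measurable_const)
  have hmeasΩp : MeasurableSet Ωp := MeasurableSet.univ_pi fun i => measurableSet_Ioo
  -- Step 1 : mass in Ω is at least M/2
  have hcover : Ωᶜ ⊆ B ∪ ⋃ i, A i := by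
    intro z hz
    simp only [hΩ, Set.mem_compl_iff, Set.mem_setOf_eq, not_forall] at hz
    obtain ⟨i, hi⟩ := hz
    rw [Set.mem_Ioo, not_and_or, not_lt, not_lt] at hi
    by_cases hBz : ∃ j, R ≤ |z j|
    · exact Or.inl hBz
    · push_neg at hBz
      rcases hi with h | h
      · exact Or.inr (Set.mem_iUnion.2 ⟨i, ⟨h, fun j => (hBz j).le⟩⟩)
      · exact absurd (hBz i) (not_lt.2 h)
  have hind_nonneg : ∀ (S : Set (Fin N → ℝ)) z, 0 ≤ Set.indicator S g z :=
    fun S z => Set.indicator_nonneg (fun x _ => hgnn x) z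
  have hintA : Integrable (fun z => ∑ i, Set.indicator (A i) g z) :=
    integrable_finset_sum _ fun i _ => hgint.indicator (measA i)
  have hcompl : ∫ z in Ωᶜ, g z ≤ M / 4 + M / 4 := by
    have hle : ∀ z, Set.indicator Ωᶜ g z
        ≤ Set.indicator B g z + ∑ i, Set.indicator (A i) g z := by
      intro z
      by_cases hz : z ∈ Ωᶜ
      · rcases hcover hz with hBz | hAz
        · rw [Set.indicator_of_mem hz, Set.indicator_of_mem hBz]
          have h0 : 0 ≤ ∑ i, Set.indicator (A i) g z :=
            Finset.sum_nonneg fun i _ => hind_nonneg _ z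
          linarith
        · obtain ⟨i₀, hi₀⟩ := Set.mem_iUnion.1 hAz
          rw [Set.indicator_of_mem hz]
          have h1 : g z ≤ ∑ i, Set.indicator (A i) g z := by
            have h : Set.indicator (A i₀) g z ≤ ∑ i, Set.indicator (A i) g z :=
              Finset.single_le_sum (f := fun i => Set.indicator (A i) g z)
                (fun i _ => hind_nonneg _ z) (Finset.mem_univ i₀)
            rwa [Set.indicator_of_mem hi₀] at h
          have h2 : 0 ≤ Set.indicator B g z := hind_nonneg _ z
          linarith
      · rw [Set.indicator_of_notMem hz]
        exact add_nonneg (hind_nonneg _ z)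
          (Finset.sum_nonneg fun i _ => hind_nonneg _ z)
    have hmono' := integral_mono (hgint.indicator measΩ.compl)
      ((hgint.indicator measB).add hintA) hle
    rw [integral_indicator measΩ.compl,
      integral_add' (hgint.indicator measB) hintA,
      integral_indicator measB, integral_finset_sum _ (fun i _ => hgint.indicator (measA i))]
      at hmono'
    simp_rw [integral_indicator (measA _)] at hmono'
    have hNpos : (0:ℝ) < N := by exact_mod_cast Nat.lt_of_lt_of_le Nat.zero_lt_one hN
    have hsumA : ∑ i, ∫ z in A i, g z ≤ M / 4 := by
      calc ∑ i : Fin N, ∫ z in A i, g z ≤ ∑ _i : Fin N, M / (4 * N) :=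
            Finset.sum_le_sum fun i _ => hb i
        _ = N * (M / (4 * N)) := by rw [Finset.sum_const, Finset.card_univ,
              Fintype.card_fin, nsmul_eq_mul]
        _ = M / 4 := by field_simp
    have haB : ∫ z in B, g z ≤ M / 4 := ha
    linarith
  have hΩhalf : M / 2 ≤ ∫ z in Ω, g z := by
    have := integral_add_compl measΩ hgint
    rw [hM] at this
    linarith
  -- Step 2 : Ω decomposes into 2^N reflected copies of Ωp
  have hflip_abs : ∀ z : Fin N → ℝ, qpflip (fun i => decide (z i < 0)) z = fun i => |z i| := by
    intro z; funext i
    simp only [qpflip]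
    by_cases hzi : z i < 0
    · simp [hzi, abs_of_neg hzi]
    · simp [hzi, abs_of_nonneg (not_lt.1 hzi)]
  have hUnion : Ω = ⋃ b : Fin N → Bool, qpflip b ⁻¹' Ωp := by
    ext z
    simp only [hΩ, Set.mem_setOf_eq, Set.mem_iUnion, Set.mem_preimage, hΩp, Set.mem_pi,
      Set.mem_univ, true_implies]
    constructor
    · intro h
      exact ⟨fun i => decide (z i < 0), fun i => by rw [hflip_abs z]; exact h i⟩
    · rintro ⟨b, hb'⟩ i
      have h1 := hb' i
      have habs2 : |z i| = |qpflip b z i| := by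
        simp only [qpflip]
        cases hbi : b i <;> simp
      have hpos : 0 < qpflip b z i := lt_trans hr₀ (Set.mem_Ioo.1 h1).1
      rw [habs2, abs_of_pos hpos]
      exact h1
  have hdisj : Set.Pairwise (↑(Finset.univ : Finset (Fin N → Bool)))
      (Function.onFun Disjoint fun b => qpflip b ⁻¹' Ωp) := by
    intro b _ b' _ hne
    rw [Function.onFun, Set.disjoint_left]
    intro z hz hz'
    obtain ⟨i, hi⟩ : ∃ i, b i ≠ b' i := by
      by_contra h; push_neg at h; exact hne (funext h)
    rw [Set.mem_preimage, hΩp, Set.mem_pi] at hz hz'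
    have h1 := hz i (Set.mem_univ i)
    have h2 := hz' i (Set.mem_univ i)
    simp only [qpflip, Set.mem_Ioo] at h1 h2
    cases hbi : b i <;> cases hbi' : b' i
    · exact hi (hbi.trans hbi'.symm)
    · rw [hbi] at h1; rw [hbi'] at h2
      norm_num at h1 h2
      linarith [h1.1, h2.1]
    · rw [hbi] at h1; rw [hbi'] at h2
      norm_num at h1 h2
      linarith [h1.1, h2.1]
    · exact hi (hbi.trans hbi'.symm)
  have hpre_meas : ∀ b : Fin N → Bool, MeasurableSet (qpflip b ⁻¹' Ωp) :=
    fun b => hmeasΩp.preimage (qpflip_measurePreserving b).measurable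
  have hsum : ∫ z in Ω, g z = (2:ℝ)^N * ∫ z in Ωp, g z := by
    have heach : ∀ b : Fin N → Bool, ∫ z in qpflip b ⁻¹' Ωp, g z = ∫ z in Ωp, g z := by
      intro b
      have hinv : ∀ z, g z = g (qpflip b z) := fun z => (qp_g_qpflip g hsym b z).symm
      calc ∫ z in qpflip b ⁻¹' Ωp, g z = ∫ z in qpflip b ⁻¹' Ωp, g (qpflip b z) := by
            simp_rw [← hinv]
        _ = ∫ z in Ωp, g z :=
            (qpflip_measurePreserving b).setIntegral_preimage_emb (qpflip_embedding b) g Ωp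
    have hbiu : Ω = ⋃ b ∈ (Finset.univ : Finset (Fin N → Bool)), qpflip b ⁻¹' Ωp := by
      rw [hUnion]; simp
    rw [hbiu, integral_biUnion_finset Finset.univ (fun b _ => hpre_meas b) hdisj
      (fun b _ => hgint.integrableOn)]
    simp_rw [heach]
    rw [Finset.sum_const, Finset.card_univ, nsmul_eq_mul]
    norm_num [Fintype.card_fun]
  -- Step 3 : integral over Ωp bounded by g c * (R - r₀)^N
  have hvol : volume Ωp = ENNReal.ofReal (R - r₀) ^ N := by
    rw [hΩp, volume_pi_pi]
    simp [Real.volume_Ioo]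
  have hvol_lt : volume Ωp < ⊤ := by
    rw [hvol]
    exact ENNReal.pow_lt_top ENNReal.ofReal_lt_top
  have hgcle : ∀ z ∈ Ωp, g z ≤ g c := by
    intro z hz
    rw [hΩp, Set.mem_pi] at hz
    exact qp_mono g hmono c z (fun i => hr₀.le)
      (fun i => ((hz i (Set.mem_univ i)).1).le)
  have h3 : ∫ z in Ωp, g z ≤ g c * (R - r₀)^N := by
    have hle := setIntegral_mono_on hgint.integrableOn
      (integrableOn_const hvol_lt.ne) hmeasΩp hgcle
    rw [setIntegral_const, measureReal_def, hvol, smul_eq_mul] at hle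
    rw [ENNReal.toReal_pow, ENNReal.toReal_ofReal (by linarith)] at hle
    linarith [hle]
  -- Step 4 : conclude
  have hP : (0:ℝ) < (R - r₀)^N := pow_pos (by linarith) N
  have h2N : (0:ℝ) < 2^N := by positivity
  have hgc : M * ((2:ℝ)^(N+1))⁻¹ * ((R - r₀)^N)⁻¹ ≤ g c := by
    have hkey : M / 2 ≤ 2^N * (g c * (R - r₀)^N) := by
      calc M / 2 ≤ ∫ z in Ω, g z := hΩhalf
        _ = (2:ℝ)^N * ∫ z in Ωp, g z := hsum
        _ ≤ 2^N * (g c * (R - r₀)^N) := by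
            exact mul_le_mul_of_nonneg_left h3 (le_of_lt h2N)
    have hne1 : ((2:ℝ)^N) ≠ 0 := h2N.ne'
    have hne2 : ((R - r₀)^N) ≠ 0 := hP.ne'
    have heq : M * ((2:ℝ)^(N+1))⁻¹ * ((R - r₀)^N)⁻¹ = (M / 2) / (2^N * (R - r₀)^N) := by
      rw [pow_succ, div_div, div_eq_mul_inv, mul_assoc, ← mul_inv]
      congr 2
      ring
    rw [heq, div_le_iff₀ (mul_pos h2N hP)]
    calc M / 2 ≤ 2^N * (g c * (R - r₀)^N) := hkey
      _ = g c * (2^N * (R - r₀)^N) := by ring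
  have hyc : g c ≤ g y := by
    have hrw : g y = g (fun i => |y i|) := by
      rw [← hflip_abs y, qp_g_qpflip g hsym]
    rw [hrw]
    exact qp_mono g hmono (fun i => |y i|) c (fun i => abs_nonneg _) hy
  linarith
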